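/- arXiv:1801.00581 — 2 statements merged into one kernel-verified Lean document; each statement's English description precedes it below -/
import Mathlib

section
/- Let (G,·,D,⋆) be a probabilistic invariant metric group with ⋆ sup-continuous. Then the set Lip¹_⋆(G,Δ⁺) of probabilistic 1-Lipschitz maps is closed under sup-convolution ⊙ and (Lip¹_⋆(G,Δ⁺), ⊙) is a monoid with identity element δ_e. Moreover δ : G → Lip¹_⋆(G,Δ⁺), a ↦ δ_a, is an injective monoid (group) homomorphism. -/
open Filter Topology Set

/-- A (real-domain representation of a) distribution function in Δ⁺ :
nondecreasing, with values in [0,1], left-continuous, vanishing on (-∞,0]. -/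
def MemDP (f : ℝ → ℝ) : Prop :=
  Monotone f ∧ (∀ t, 0 ≤ f t) ∧ (∀ t, f t ≤ 1) ∧
  (∀ t : ℝ, Tendsto f (nhdsWithin t (Set.Iio t)) (nhds (f t))) ∧
  (∀ t ≤ (0:ℝ), f t = 0)

/-- The distribution H₀. -/
noncomputable def H0 : ℝ → ℝ := fun t => if 0 < t then 1 else 0

/-- The distribution H_∞ (zero at every finite point). -/
def Hinf : ℝ → ℝ := fun _ => 0

/-- Pointwise order on distribution functions. -/
def dpLE (f g : ℝ → ℝ) : Prop := ∀ t, f t ≤ g t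

/-- Triangle function on Δ⁺. -/
structure IsTriangle (star : (ℝ → ℝ) → (ℝ → ℝ) → (ℝ → ℝ)) : Prop where
  mem : ∀ f g, MemDP f → MemDP g → MemDP (star f g)
  comm : ∀ f g, MemDP f → MemDP g → star f g = star g f
  assoc : ∀ f g h, MemDP f → MemDP g → MemDP h →
    star f (star g h) = star (star f g) h
  ident : ∀ f, MemDP f → star f H0 = f
  mono : ∀ f g h, MemDP f → MemDP g → MemDP h → dpLE f g → dpLE (star f h) (star g h)

/-- Sup-continuity of a triangle function (suprema in Δ⁺ are pointwise). -/
def SupCont (star : (ℝ → ℝ) → (ℝ → ℝ) → (ℝ → ℝ)) : Prop :=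
  ∀ (I : Type) (_ : Nonempty I) (F : I → ℝ → ℝ) (L : ℝ → ℝ),
    (∀ i, MemDP (F i)) → MemDP L →
    ∀ t, (⨆ i, star (F i) L t) = star (fun s => ⨆ i, F i s) L t

/-- Weak convergence in Δ⁺: pointwise convergence at each continuity point of the limit. -/
def WConv (Fn : ℕ → ℝ → ℝ) (F : ℝ → ℝ) : Prop :=
  ∀ t, ContinuousAt F t → Tendsto (fun n => Fn n t) atTop (nhds (F t))

/-- Continuity of a triangle function w.r.t. weak convergence. -/
def StarCont (star : (ℝ → ℝ) → (ℝ → ℝ) → (ℝ → ℝ)) : Prop :=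
  ∀ (Fn Ln : ℕ → ℝ → ℝ) (F L : ℝ → ℝ),
    (∀ n, MemDP (Fn n)) → (∀ n, MemDP (Ln n)) → MemDP F → MemDP L →
    WConv Fn F → WConv Ln L → WConv (fun n => star (Fn n) (Ln n)) (star F L)

/-- Probabilistic metric space (G, D, ⋆). -/
structure IsPMS {G : Type} (D : G → G → ℝ → ℝ)
    (star : (ℝ → ℝ) → (ℝ → ℝ) → (ℝ → ℝ)) : Prop where
  tri : IsTriangle star
  mem : ∀ p q, MemDP (D p q)
  eq_iff : ∀ p q, D p q = H0 ↔ p = q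
  symm : ∀ p q, D p q = D q p
  triangle_ineq : ∀ p q r, dpLE (star (D p q) (D q r)) (D p r)

/-- Probabilistic invariant metric group. -/
structure IsPIMG {G : Type} [Group G] (D : G → G → ℝ → ℝ)
    (star : (ℝ → ℝ) → (ℝ → ℝ) → (ℝ → ℝ)) extends IsPMS D star : Prop where
  invL : ∀ p q r : G, D (r * p) (r * q) = D p q
  invR : ∀ p q r : G, D (p * r) (q * r) = D p q

/-- Probabilistic 1-Lipschitz map. -/
def Lip1 {G : Type} (D : G → G → ℝ → ℝ) (star : (ℝ → ℝ) → (ℝ → ℝ) → (ℝ → ℝ))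
    (f : G → ℝ → ℝ) : Prop :=
  (∀ x, MemDP (f x)) ∧ ∀ x y, dpLE (star (D x y) (f y)) (f x)

/-- δ_a(y) = D(y,a). -/
def dlt {G : Type} (D : G → G → ℝ → ℝ) (a : G) : G → ℝ → ℝ := fun y => D y a

/-- Sup-convolution (f ⊙ g)(x) = sup_{yz = x} f(y) ⋆ g(z), pointwise. -/
noncomputable def sconv {G : Type} [Group G] (star : (ℝ → ℝ) → (ℝ → ℝ) → (ℝ → ℝ))
    (f g : G → ℝ → ℝ) : G → ℝ → ℝ :=
  fun x t => ⨆ y : G, star (f (x * y⁻¹)) (g y) t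

/-- Cauchy sequence for a probabilistic metric: D(a_n, a_p) → H₀ weakly. -/
def PCauchy {G : Type} (D : G → G → ℝ → ℝ) (a : ℕ → G) : Prop :=
  ∀ t > (0:ℝ), ∀ ε > (0:ℝ), ∃ N, ∀ n ≥ N, ∀ p ≥ N, 1 - ε ≤ D (a n) (a p) t

/-- Π(G): probabilistic 1-Lipschitz maps that are pointwise weak limits of δ_{a_n}
for some Cauchy sequence (a_n). -/
def InPi {G : Type} (D : G → G → ℝ → ℝ) (star : (ℝ → ℝ) → (ℝ → ℝ) → (ℝ → ℝ))
    (f : G → ℝ → ℝ) : Prop :=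
  Lip1 D star f ∧ ∃ a : ℕ → G, PCauchy D a ∧ ∀ x, WConv (fun n => D (a n) x) (f x)

/-- 𝔻(f,g) = sup_{x∈G} f(x) ⋆ g(x), pointwise. -/
noncomputable def DD {G : Type} (star : (ℝ → ℝ) → (ℝ → ℝ) → (ℝ → ℝ))
    (f g : G → ℝ → ℝ) : ℝ → ℝ :=
  fun t => ⨆ x : G, star (f x) (g x) t

/-- t-norm on [0,1]. -/
structure IsTnorm (T : ℝ → ℝ → ℝ) : Prop where
  mem : ∀ x ∈ Set.Icc (0:ℝ) 1, ∀ y ∈ Set.Icc (0:ℝ) 1, T x y ∈ Set.Icc (0:ℝ) 1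
  comm : ∀ x y, T x y = T y x
  assoc : ∀ x y z, T x (T y z) = T (T x y) z
  mono : ∀ x y z, y ≤ z → T x y ≤ T x z
  one : ∀ x ∈ Set.Icc (0:ℝ) 1, T x 1 = x

/-- Left-continuity of a t-norm (in each variable; by commutativity one suffices). -/
def LeftCtsTnorm (T : ℝ → ℝ → ℝ) : Prop :=
  ∀ y x : ℝ, Tendsto (fun s => T s y) (nhdsWithin x (Set.Iio x)) (nhds (T x y))

/-- The triangle function ⋆_T : (F ⋆_T L)(t) = sup_{s+u=t} T(F(s), L(u)). -/
noncomputable def starT (T : ℝ → ℝ → ℝ) (f g : ℝ → ℝ) : ℝ → ℝ :=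
  fun t => ⨆ s : ℝ, T (f s) (g (t - s))

lemma memDP_sSup_Iio {f : ℝ → ℝ} (hf : MemDP f) (t : ℝ) :
    f t = sSup (f '' Set.Iio t) := by
  have hb : BddAbove (f '' Set.Iio t) := ⟨1, by rintro _ ⟨s, _, rfl⟩; exact hf.2.2.1 s⟩
  refine le_antisymm ?_ (csSup_le ⟨_, t - 1, sub_one_lt t, rfl⟩ ?_)
  · refine le_of_tendsto (hf.2.2.2.1 t) ?_
    filter_upwards [self_mem_nhdsWithin] with s hs
    exact le_csSup hb ⟨s, hs, rfl⟩
  · rintro _ ⟨s, hs, rfl⟩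
    exact hf.1 (le_of_lt hs)

lemma memDP_iSup {I : Type} [Nonempty I] {F : I → ℝ → ℝ} (h : ∀ i, MemDP (F i)) :
    MemDP (fun t => ⨆ i, F i t) := by
  have hb : ∀ t, BddAbove (Set.range fun i => F i t) :=
    fun t => ⟨1, by rintro _ ⟨i, rfl⟩; exact (h i).2.2.1 t⟩
  have hmono : Monotone (fun t => ⨆ i, F i t) :=
    fun s t hst => ciSup_mono (hb t) (fun i => (h i).1 hst)
  have h1 : ∀ t, (⨆ i, F i t) ≤ 1 := fun t => ciSup_le fun i => (h i).2.2.1 t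
  refine ⟨hmono, ?_, h1, ?_, ?_⟩
  · intro t
    exact le_trans ((h (Classical.arbitrary I)).2.1 t) (le_ciSup (hb t) _)
  · intro t
    have hbb : BddAbove ((fun s => ⨆ i, F i s) '' Set.Iio t) :=
      ⟨1, by rintro _ ⟨s, _, rfl⟩; exact h1 s⟩
    have key : (⨆ i, F i t) = sSup ((fun s => ⨆ i, F i s) '' Set.Iio t) := by
      refine le_antisymm (ciSup_le fun i => ?_)
        (csSup_le ⟨_, t - 1, sub_one_lt t, rfl⟩ ?_)
      · rw [memDP_sSup_Iio (h i) t]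
        refine csSup_le ⟨_, t - 1, sub_one_lt t, rfl⟩ ?_
        rintro _ ⟨s, hs, rfl⟩
        exact le_trans (le_ciSup (hb s) i) (le_csSup hbb ⟨s, hs, rfl⟩)
      · rintro _ ⟨s, hs, rfl⟩
        exact hmono (le_of_lt hs)
    rw [show (fun t => ⨆ i, F i t) t = sSup ((fun s => ⨆ i, F i s) '' Set.Iio t) from key]
    exact hmono.tendsto_nhdsLT t
  · intro t ht
    have : ∀ i, F i t = 0 := fun i => (h i).2.2.2.2 t ht
    simp only [this, ciSup_const]

/-- (Lip¹_⋆(G,Δ⁺), ⊙) is a monoid with identity δ_e and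
δ : G → Lip¹_⋆(G,Δ⁺) is an injective homomorphism. -/
theorem stmt11 {G : Type} [Group G] (D : G → G → ℝ → ℝ)
    (star : (ℝ → ℝ) → (ℝ → ℝ) → (ℝ → ℝ)) (h : IsPIMG D star)
    (hsc : SupCont star) :
    (∀ f g, Lip1 D star f → Lip1 D star g → Lip1 D star (sconv star f g)) ∧
    (∀ f g k, Lip1 D star f → Lip1 D star g → Lip1 D star k →
      sconv star (sconv star f g) k = sconv star f (sconv star g k)) ∧
    (∀ f, Lip1 D star f →
      sconv star f (dlt D 1) = f ∧ sconv star (dlt D 1) f = f) ∧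
    (∀ a : G, Lip1 D star (dlt D a)) ∧
    Function.Injective (dlt D) ∧
    (∀ a b : G, sconv star (dlt D a) (dlt D b) = dlt D (a * b)) := by
  haveI : Nonempty G := ⟨1⟩
  have htri := h.tri
  have hH0 : MemDP H0 := by rw [← (h.eq_iff 1 1).2 rfl]; exact h.mem 1 1
  have hDH0 : D (1:G) 1 = H0 := (h.eq_iff 1 1).2 rfl
  have hstarH0 : ∀ f, MemDP f → star H0 f = f := fun f hf => by
    rw [htri.comm _ _ hH0 hf, htri.ident f hf]
  have bdd : ∀ (F : G → ℝ → ℝ), (∀ y, MemDP (F y)) → ∀ t,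
      BddAbove (Set.range fun y => F y t) := fun F hF t =>
    ⟨1, by rintro _ ⟨y, rfl⟩; exact (hF y).2.2.1 t⟩
  have star3 : ∀ a b c, MemDP a → MemDP b → MemDP c →
      star (star a b) c = star (star b c) a := by
    intro a b c ha hb hc
    rw [← htri.assoc a b c ha hb hc, htri.comm a (star b c) ha (htri.mem _ _ hb hc)]
  -- closure
  have c1 : ∀ f g, Lip1 D star f → Lip1 D star g → Lip1 D star (sconv star f g) := by
    intro f g hf hg
    have hmemc : ∀ x, MemDP (sconv star f g x) := fun x =>
      memDP_iSup (fun y => htri.mem _ _ (hf.1 _) (hg.1 _))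
    refine ⟨hmemc, ?_⟩
    intro x x' t
    have e1 : star (D x x') (sconv star f g x') t
        = ⨆ y : G, star (star (f (x' * y⁻¹)) (g y)) (D x x') t := by
      rw [congrFun (htri.comm _ _ (h.mem x x') (hmemc x')) t]
      exact (hsc G ⟨1⟩ (fun y => star (f (x' * y⁻¹)) (g y)) (D x x')
        (fun y => htri.mem _ _ (hf.1 _) (hg.1 _)) (h.mem x x') t).symm
    rw [e1]
    refine ciSup_le fun y => ?_
    have key : dpLE (star (star (f (x' * y⁻¹)) (g y)) (D x x'))
        (star (f (x * y⁻¹)) (g y)) := by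
      rw [star3 _ _ _ (hf.1 _) (hg.1 _) (h.mem x x'),
          star3 _ _ _ (hg.1 _) (h.mem x x') (hf.1 _)]
      refine htri.mono _ _ _ (htri.mem _ _ (h.mem x x') (hf.1 _)) (hf.1 _) (hg.1 _) ?_
      intro s
      rw [show D x x' = D (x * y⁻¹) (x' * y⁻¹) from (h.invR x x' y⁻¹).symm]
      exact hf.2 (x * y⁻¹) (x' * y⁻¹) s
    exact le_trans (key t)
      (le_ciSup (bdd (fun y => star (f (x * y⁻¹)) (g y))
        (fun y => htri.mem _ _ (hf.1 _) (hg.1 _)) t) y)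
  -- associativity
  have c2 : ∀ f g k, Lip1 D star f → Lip1 D star g → Lip1 D star k →
      sconv star (sconv star f g) k = sconv star f (sconv star g k) := by
    intro f g k hf hg hk
    have hgk := c1 g k hg hk
    funext x t
    have eL : sconv star (sconv star f g) k x t
        = ⨆ y : G, ⨆ z : G, star (star (f (x * y⁻¹ * z⁻¹)) (g z)) (k y) t := by
      refine iSup_congr fun y => ?_
      exact (hsc G ⟨1⟩ (fun z => star (f (x * y⁻¹ * z⁻¹)) (g z)) (k y)
        (fun z => htri.mem _ _ (hf.1 _) (hg.1 _)) (hk.1 y) t).symm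
    have eR : sconv star f (sconv star g k) x t
        = ⨆ w : G, ⨆ u : G, star (star (g (w * u⁻¹)) (k u)) (f (x * w⁻¹)) t := by
      refine iSup_congr fun w => ?_
      rw [congrFun (htri.comm _ _ (hf.1 _) (hgk.1 w)) t]
      exact (hsc G ⟨1⟩ (fun u => star (g (w * u⁻¹)) (k u)) (f (x * w⁻¹))
        (fun u => htri.mem _ _ (hg.1 _) (hk.1 _)) (hf.1 _) t).symm
    rw [eL, eR]
    have bddI : ∀ w : G, BddAbove (Set.range fun u : G =>
        star (star (g (w * u⁻¹)) (k u)) (f (x * w⁻¹)) t) := fun w =>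
      bdd _ (fun u => htri.mem _ _ (htri.mem _ _ (hg.1 _) (hk.1 _)) (hf.1 _)) t
    have bddO : BddAbove (Set.range fun w : G => ⨆ u : G,
        star (star (g (w * u⁻¹)) (k u)) (f (x * w⁻¹)) t) :=
      ⟨1, by rintro _ ⟨w, rfl⟩; exact ciSup_le fun u =>
        (htri.mem _ _ (htri.mem _ _ (hg.1 _) (hk.1 _)) (hf.1 _)).2.2.1 t⟩
    have bddI' : ∀ y : G, BddAbove (Set.range fun z : G =>
        star (star (f (x * y⁻¹ * z⁻¹)) (g z)) (k y) t) := fun y =>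
      bdd _ (fun z => htri.mem _ _ (htri.mem _ _ (hf.1 _) (hg.1 _)) (hk.1 _)) t
    have bddO' : BddAbove (Set.range fun y : G => ⨆ z : G,
        star (star (f (x * y⁻¹ * z⁻¹)) (g z)) (k y) t) :=
      ⟨1, by rintro _ ⟨y, rfl⟩; exact ciSup_le fun z =>
        (htri.mem _ _ (htri.mem _ _ (hf.1 _) (hg.1 _)) (hk.1 _)).2.2.1 t⟩
    have hterm : ∀ y z : G, star (star (f (x * y⁻¹ * z⁻¹)) (g z)) (k y) t
        = star (star (g z) (k y)) (f (x * y⁻¹ * z⁻¹)) t := fun y z =>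
      congrFun (star3 _ _ _ (hf.1 _) (hg.1 _) (hk.1 _)) t
    have keyR : ∀ w u : G, star (star (g (w * u⁻¹)) (k u)) (f (x * w⁻¹)) t
        ≤ ⨆ w' : G, ⨆ u' : G, star (star (g (w' * u'⁻¹)) (k u')) (f (x * w'⁻¹)) t :=
      fun w u => le_trans (le_ciSup (bddI w) u) (le_ciSup bddO w)
    have keyL : ∀ y z : G, star (star (f (x * y⁻¹ * z⁻¹)) (g z)) (k y) t
        ≤ ⨆ y' : G, ⨆ z' : G, star (star (f (x * y'⁻¹ * z'⁻¹)) (g z')) (k y') t :=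
      fun y z => le_trans (le_ciSup (bddI' y) z) (le_ciSup bddO' y)
    refine le_antisymm (ciSup_le fun y => ciSup_le fun z => ?_)
      (ciSup_le fun w => ciSup_le fun u => ?_)
    · rw [hterm y z]
      have := keyR (z * y) y
      have e1 : z * y * y⁻¹ = z := mul_inv_cancel_right z y
      have e2 : x * (z * y)⁻¹ = x * y⁻¹ * z⁻¹ := by group
      rw [e1, e2] at this
      exact this
    · have := keyL u (w * u⁻¹)
      have e1 : x * u⁻¹ * (w * u⁻¹)⁻¹ = x * w⁻¹ := by group
      rw [e1] at this
      rw [← congrFun (star3 (f (x * w⁻¹)) (g (w * u⁻¹)) (k u)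
        (hf.1 _) (hg.1 _) (hk.1 _)) t]
      exact this
  -- identity
  have c3 : ∀ f, Lip1 D star f →
      sconv star f (dlt D 1) = f ∧ sconv star (dlt D 1) f = f := by
    intro f hf
    constructor
    · funext x t
      refine le_antisymm (ciSup_le fun y => ?_) ?_
      · have e1 : dlt D 1 y = D x (x * y⁻¹) := by
          show D y 1 = D x (x * y⁻¹)
          rw [← h.invL y 1 (x * y⁻¹), inv_mul_cancel_right, mul_one]
        rw [e1, congrFun (htri.comm (f (x * y⁻¹)) (D x (x * y⁻¹))
          (hf.1 _) (h.mem _ _)) t]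
        exact hf.2 x (x * y⁻¹) t
      · have e2 : star (f (x * (1:G)⁻¹)) (dlt D 1 1) t = f x t := by
          show star (f (x * (1:G)⁻¹)) (D 1 1) t = f x t
          rw [hDH0, htri.ident _ (hf.1 _), inv_one, mul_one]
        rw [← e2]
        exact le_ciSup (bdd (fun y => star (f (x * y⁻¹)) (dlt D 1 y))
          (fun y => htri.mem _ _ (hf.1 _) (h.mem _ _)) t) 1
    · funext x t
      refine le_antisymm (ciSup_le fun y => ?_) ?_
      · have e1 : dlt D 1 (x * y⁻¹) = D x y := by
          show D (x * y⁻¹) 1 = D x y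
          rw [← h.invR (x * y⁻¹) 1 y, inv_mul_cancel_right, one_mul]
        rw [e1]
        exact hf.2 x y t
      · have e2 : star (dlt D 1 (x * x⁻¹)) (f x) t = f x t := by
          show star (D (x * x⁻¹) 1) (f x) t = f x t
          rw [mul_inv_cancel, hDH0, hstarH0 _ (hf.1 x)]
        rw [← e2]
        exact le_ciSup (bdd (fun y => star (dlt D 1 (x * y⁻¹)) (f y))
          (fun y => htri.mem _ _ (h.mem _ _) (hf.1 _)) t) x
  -- dlt Lip1
  have c4 : ∀ a : G, Lip1 D star (dlt D a) := fun a =>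
    ⟨fun x => h.mem x a, fun x y => h.triangle_ineq x y a⟩
  -- injective
  have c5 : Function.Injective (dlt D) := by
    intro a b hab
    have h1 : D a a = D a b := congrFun hab a
    exact (h.eq_iff a b).1 (h1.symm.trans ((h.eq_iff a a).2 rfl))
  -- homomorphism
  have c6 : ∀ a b : G, sconv star (dlt D a) (dlt D b) = dlt D (a * b) := by
    intro a b
    funext x t
    refine le_antisymm (ciSup_le fun y => ?_) ?_
    · have e1 : dlt D a (x * y⁻¹) = D x (a * y) := by
        show D (x * y⁻¹) a = D x (a * y)
        rw [← h.invR (x * y⁻¹) a y, inv_mul_cancel_right]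
      have e2 : dlt D b y = D (a * y) (a * b) := by
        show D y b = D (a * y) (a * b)
        rw [h.invL y b a]
      rw [e1, e2]
      exact h.triangle_ineq x (a * y) (a * b) t
    · have e3 : star (dlt D a (x * (a⁻¹ * x)⁻¹)) (dlt D b (a⁻¹ * x)) t
          = dlt D (a * b) x t := by
        show star (D (x * (a⁻¹ * x)⁻¹) a) (D (a⁻¹ * x) b) t = D x (a * b) t
        have e4 : x * (a⁻¹ * x)⁻¹ = a := by group
        have e5 : D (a⁻¹ * x) b = D x (a * b) := by
          rw [← h.invL (a⁻¹ * x) b a, mul_inv_cancel_left]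
        rw [e4, (h.eq_iff a a).2 rfl, e5, hstarH0 _ (h.mem x (a * b))]
      rw [← e3]
      exact le_ciSup (bdd (fun y => star (dlt D a (x * y⁻¹)) (dlt D b y))
        (fun y => htri.mem _ _ (h.mem _ _) (h.mem _ _)) t) (a⁻¹ * x)
  exact ⟨c1, c2, c3, c4, c5, c6⟩
end

section
/- Let (G,D,⋆) be a probabilistic metric space with ⋆ continuous. Define 𝔻(f,g) := sup_{x∈G} f(x) ⋆ g(x) on Π(G). Then (Π(G), 𝔻, ⋆) is a probabilistic complete metric space, 𝔻(δ_a,δ_b) = D(a,b) for all a,b ∈ G, and {δ_a : a ∈ G} is dense in (Π(G), 𝔻). Hence every probabilistic metric space with continuous triangle function admits a completion. -/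
open Filter Topology Set

section Helpers
lemma H0_of_pos {t : ℝ} (h : 0 < t) : H0 t = 1 := if_pos h
lemma H0_of_nonpos {t : ℝ} (h : t ≤ 0) : H0 t = 0 := if_neg (not_lt.2 h)

lemma H0_contAt {t : ℝ} (ht : t ≠ 0) : ContinuousAt H0 t := by
  rcases lt_or_gt_of_ne ht with h | h
  · have hev : ∀ᶠ s in 𝓝 t, H0 s = H0 t := by
      filter_upwards [Iio_mem_nhds h] with s hs
      rw [H0_of_nonpos (le_of_lt hs), H0_of_nonpos h.le]
    exact ContinuousAt.congr continuousAt_const (by filter_upwards [hev] with s hs using hs.symm) |>.congr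
      (Eventually.of_forall fun _ => rfl)
  · have hev : ∀ᶠ s in 𝓝 t, H0 s = H0 t := by
      filter_upwards [Ioi_mem_nhds h] with s hs
      rw [H0_of_pos hs, H0_of_pos h]
    exact ContinuousAt.congr continuousAt_const (by filter_upwards [hev] with s hs using hs.symm)

lemma memDP_H0 : MemDP H0 := by
  refine ⟨?_, ?_, ?_, ?_, fun t ht => H0_of_nonpos ht⟩
  · intro a b hab
    by_cases ha : 0 < a
    · rw [H0_of_pos ha, H0_of_pos (lt_of_lt_of_le ha hab)]
    · rw [H0_of_nonpos (not_lt.1 ha)]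
      by_cases hb : 0 < b
      · rw [H0_of_pos hb]; norm_num
      · rw [H0_of_nonpos (not_lt.1 hb)]
  · intro t; by_cases ht : 0 < t
    · rw [H0_of_pos ht]; norm_num
    · rw [H0_of_nonpos (not_lt.1 ht)]
  · intro t; by_cases ht : 0 < t
    · rw [H0_of_pos ht]
    · rw [H0_of_nonpos (not_lt.1 ht)]; norm_num
  · intro t
    by_cases ht : t = 0
    · subst ht
      rw [H0_of_nonpos le_rfl]
      have : Tendsto (fun _ : ℝ => (0:ℝ)) (𝓝[<] (0:ℝ)) (𝓝 0) := tendsto_const_nhds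
      apply this.congr'
      filter_upwards [self_mem_nhdsWithin] with s hs
      exact (H0_of_nonpos (le_of_lt hs)).symm
    · exact ((H0_contAt ht).tendsto).mono_left nhdsWithin_le_nhds

lemma bddU {u : ℕ → ℝ} (h : ∀ n, u n ≤ 1) :
    IsBoundedUnder (· ≤ ·) atTop u := isBoundedUnder_of ⟨1, h⟩

lemma bddL {u : ℕ → ℝ} (h : ∀ n, 0 ≤ u n) :
    IsBoundedUnder (· ≥ ·) atTop u := isBoundedUnder_of ⟨0, h⟩

/-- left continuity from monotonicity plus sup-approximation -/
lemma tendsto_Iio_of_approx {M : ℝ → ℝ} (hm : Monotone M) {t : ℝ}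
    (h : ∀ ε > (0:ℝ), ∃ s, s < t ∧ M t - ε < M s) :
    Tendsto M (𝓝[<] t) (𝓝 (M t)) := by
  rw [tendsto_order]
  constructor
  · intro c hc
    obtain ⟨s, hst, hs⟩ := h (M t - c) (by linarith)
    filter_upwards [Ioo_mem_nhdsLT_of_mem (⟨hst, le_refl t⟩ : t ∈ Ioc s t)] with y hy
    calc c = M t - (M t - c) := by ring
    _ < M s := hs
    _ ≤ M y := hm hy.1.le
  · intro c hc
    filter_upwards [self_mem_nhdsWithin] with y hy
    exact lt_of_le_of_lt (hm (le_of_lt hy)) hc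

/-- density of continuity points of two monotone functions -/
lemma exists_contAt_Ioo {F G : ℝ → ℝ} (hF : Monotone F) (hG : Monotone G)
    {a b : ℝ} (hab : a < b) :
    ∃ s, s ∈ Ioo a b ∧ ContinuousAt F s ∧ ContinuousAt G s := by
  by_contra hcon
  push_neg at hcon
  have hsub : Ioo a b ⊆ {x | ¬ ContinuousAt F x} ∪ {x | ¬ ContinuousAt G x} := by
    intro x hx
    by_cases h1 : ContinuousAt F x
    · exact Or.inr (fun h2 => hcon x hx h1 h2)
    · exact Or.inl h1
  have hcnt : (Ioo a b : Set ℝ).Countable :=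
    Set.Countable.mono hsub ((hF.countable_not_continuousAt).union (hG.countable_not_continuousAt))
  have h0 : MeasureTheory.volume (Ioo a b) = 0 := hcnt.measure_zero _
  rw [Real.volume_Ioo] at h0
  simp [ENNReal.ofReal_eq_zero] at h0
  linarith

lemma wconv_comp {Fn : ℕ → ℝ → ℝ} {F : ℝ → ℝ} (h : WConv Fn F) {m : ℕ → ℕ}
    (hm : Tendsto m atTop atTop) : WConv (fun j => Fn (m j)) F :=
  fun t ht => (h t ht).comp hm

lemma wconv_const (F : ℝ → ℝ) : WConv (fun _ => F) F := fun _ _ => tendsto_const_nhds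

/-- weak limits preserve ≤ -/
lemma le_of_wconv {Fn Gn : ℕ → ℝ → ℝ} {F G : ℝ → ℝ} (hF : MemDP F) (hG : MemDP G)
    (h1 : WConv Fn F) (h2 : WConv Gn G) (hle : ∀ n, dpLE (Fn n) (Gn n)) : dpLE F G := by
  intro t
  have key : ∀ s, s < t → F s ≤ G t := by
    intro s hst
    obtain ⟨s', hs', hcF, hcG⟩ := exists_contAt_Ioo hF.1 hG.1 hst
    have hle' : F s' ≤ G s' :=
      le_of_tendsto_of_tendsto' (h1 s' hcF) (h2 s' hcG) (fun n => hle n s')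
    exact le_trans (hF.1 hs'.1.le) (le_trans hle' (hG.1 hs'.2.le))
  refine le_of_tendsto (hF.2.2.2.1 t) ?_
  filter_upwards [self_mem_nhdsWithin] with s hs
  exact key s hs

/-- Helly's selection principle -/
lemma helly (F : ℕ → ℝ → ℝ) (hF : ∀ n, MemDP (F n)) :
    ∃ φ : ℕ → ℕ, StrictMono φ ∧ ∃ L, MemDP L ∧ WConv (fun j => F (φ j)) L := by
  let u : ℕ → (ℚ → Set.Icc (0:ℝ) 1) := fun n q => ⟨F n q, (hF n).2.1 q, (hF n).2.2.1 q⟩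
  obtain ⟨v, -, φ, hφ, hconv⟩ :=
    (isCompact_univ (X := ℚ → Set.Icc (0:ℝ) 1)).tendsto_subseq (fun n => mem_univ (u n))
  have hpt : ∀ q : ℚ, Tendsto (fun j => F (φ j) (q:ℝ)) atTop (𝓝 (v q : ℝ)) := by
    intro q
    exact ((continuous_subtype_val.comp (continuous_apply q)).tendsto v).comp hconv
  have hvmono : ∀ q q' : ℚ, q ≤ q' → (v q : ℝ) ≤ (v q' : ℝ) := by
    intro q q' hqq
    exact le_of_tendsto_of_tendsto' (hpt q) (hpt q')
      (fun j => (hF (φ j)).1 (by exact_mod_cast hqq))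
  have hv0 : ∀ q : ℚ, (q:ℝ) ≤ 0 → (v q : ℝ) = 0 := by
    intro q hq
    have : Tendsto (fun j => F (φ j) (q:ℝ)) atTop (𝓝 0) := by
      apply tendsto_const_nhds.congr
      intro j; exact ((hF (φ j)).2.2.2.2 q hq).symm
    exact tendsto_nhds_unique (hpt q) this
  set L : ℝ → ℝ := fun t => sSup ((fun q : ℚ => (v q : ℝ)) '' {q : ℚ | (q:ℝ) < t}) with hL
  have hne : ∀ t : ℝ, ((fun q : ℚ => (v q : ℝ)) '' {q : ℚ | (q:ℝ) < t}).Nonempty := by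
    intro t
    obtain ⟨q, hq⟩ := exists_rat_lt t
    exact ⟨v q, ⟨q, hq, rfl⟩⟩
  have hbdd : ∀ t : ℝ, BddAbove ((fun q : ℚ => (v q : ℝ)) '' {q : ℚ | (q:ℝ) < t}) := by
    intro t
    refine ⟨1, ?_⟩
    rintro x ⟨q, -, rfl⟩
    exact (v q).2.2
  have hLmono : Monotone L := by
    intro s t hst
    exact csSup_le_csSup (hbdd t) (hne s) (image_mono (fun q hq => lt_of_lt_of_le hq hst))
  have hLle : ∀ q : ℚ, ∀ t : ℝ, (q:ℝ) < t → (v q : ℝ) ≤ L t :=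
    fun q t hq => le_csSup (hbdd t) ⟨q, hq, rfl⟩
  have hL0 : ∀ t : ℝ, 0 ≤ L t := by
    intro t
    obtain ⟨q, hq⟩ := exists_rat_lt t
    exact le_trans (v q).2.1 (hLle q t hq)
  have hL1 : ∀ t : ℝ, L t ≤ 1 := by
    intro t
    apply csSup_le (hne t)
    rintro x ⟨q, -, rfl⟩; exact (v q).2.2
  have hLz : ∀ t : ℝ, t ≤ 0 → L t = 0 := by
    intro t ht
    refine le_antisymm (csSup_le (hne t) ?_) (hL0 t)
    rintro x ⟨q, hq, rfl⟩
    exact le_of_eq (hv0 q (le_of_lt (lt_of_lt_of_le hq ht)))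
  have hLlc : ∀ t : ℝ, Tendsto L (𝓝[<] t) (𝓝 (L t)) := by
    intro t
    apply tendsto_Iio_of_approx hLmono
    intro ε hε
    obtain ⟨x, ⟨q, hq, rfl⟩, hx⟩ := exists_lt_of_lt_csSup (hne t) (by linarith : L t - ε < L t)
    have hq' : (q:ℝ) < t := hq
    have hx' : L t - ε < (v q : ℝ) := hx
    refine ⟨((q:ℝ) + t)/2, by linarith, ?_⟩
    exact lt_of_lt_of_le hx' (hLle q _ (by linarith))
  refine ⟨φ, hφ, L, ⟨hLmono, hL0, hL1, hLlc, hLz⟩, ?_⟩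
  intro t hct
  have hbu : IsBoundedUnder (· ≤ ·) atTop (fun j => F (φ j) t) := bddU (fun j => (hF (φ j)).2.2.1 t)
  have hbl : IsBoundedUnder (· ≥ ·) atTop (fun j => F (φ j) t) := bddL (fun j => (hF (φ j)).2.1 t)
  apply tendsto_of_le_liminf_of_limsup_le ?_ ?_ hbu hbl
  · -- L t ≤ liminf
    apply csSup_le (hne t)
    rintro x ⟨q, hq, rfl⟩
    have hq' : (q:ℝ) < t := hq
    have h1 : (v q : ℝ) = liminf (fun j => F (φ j) (q:ℝ)) atTop := ((hpt q).liminf_eq).symm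
    show (v q : ℝ) ≤ _
    rw [h1]
    apply liminf_le_liminf (Eventually.of_forall (fun j => (hF (φ j)).1 (le_of_lt hq')))
      (bddL (fun j => (hF (φ j)).2.1 q)) ((bddU (fun j => (hF (φ j)).2.2.1 t)).isCoboundedUnder_ge)
  · -- limsup ≤ L t
    apply le_of_forall_pos_le_add
    intro ε hε
    obtain ⟨δ, hδ, hδ'⟩ := Metric.continuousAt_iff.1 hct (ε/2) (by linarith)
    obtain ⟨q, hq1, hq2⟩ := exists_rat_btwn (show t < t + δ/2 by linarith)
    have hq3 : L (t + δ/2) < L t + ε/2 := by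
      have := hδ' (show dist (t + δ/2) t < δ by rw [Real.dist_eq]; rw [abs_of_pos] <;> linarith)
      rw [Real.dist_eq] at this
      have := abs_lt.1 this
      linarith [this.1, this.2]
    have hvq : (v q : ℝ) ≤ L t + ε/2 := le_trans (hLle q _ hq2) hq3.le
    have hlim : limsup (fun j => F (φ j) t) atTop ≤ (v q : ℝ) := by
      rw [← (hpt q).limsup_eq]
      apply limsup_le_limsup (Eventually.of_forall (fun j => (hF (φ j)).1 (le_of_lt hq1)))
        (hbl.isCoboundedUnder_le) (bddU (fun j => (hF (φ j)).2.2.1 q))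
    linarith
section PMS
set_option linter.unusedSectionVars false
variable {G : Type} [Nonempty G] {D : G → G → ℝ → ℝ}
  {star : (ℝ → ℝ) → (ℝ → ℝ) → (ℝ → ℝ)}

lemma memDP_DD (h : IsPMS D star) {f g : G → ℝ → ℝ}
    (hf : ∀ x, MemDP (f x)) (hg : ∀ x, MemDP (g x)) : MemDP (DD star f g) := by
  have hst : ∀ x, MemDP (star (f x) (g x)) := fun x => h.tri.mem _ _ (hf x) (hg x)
  have hbdd : ∀ t : ℝ, BddAbove (range (fun x => star (f x) (g x) t)) := by
    intro t; refine ⟨1, ?_⟩; rintro y ⟨x, rfl⟩; exact (hst x).2.2.1 t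
  have hmono : Monotone (DD star f g) := by
    intro s t hstt
    exact ciSup_le (fun x => le_trans ((hst x).1 hstt) (le_ciSup (hbdd t) x))
  obtain ⟨x0⟩ := ‹Nonempty G›
  refine ⟨hmono, ?_, ?_, ?_, ?_⟩
  · intro t; exact le_trans ((hst x0).2.1 t) (le_ciSup (hbdd t) x0)
  · intro t; exact ciSup_le (fun x => (hst x).2.2.1 t)
  · intro t
    apply tendsto_Iio_of_approx hmono
    intro ε hε
    obtain ⟨x, hx⟩ := exists_lt_of_lt_ciSup
      (show DD star f g t - ε < ⨆ x, star (f x) (g x) t by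
        simpa [DD] using sub_lt_self (DD star f g t) hε)
    have hev : ∀ᶠ s in 𝓝[<] t, DD star f g t - ε < star (f x) (g x) s :=
      ((hst x).2.2.2.1 t).eventually (eventually_gt_nhds hx)
    obtain ⟨s, hs1, hs2⟩ := (hev.and self_mem_nhdsWithin).exists
    exact ⟨s, hs2, lt_of_lt_of_le hs1 (le_ciSup (hbdd s) x)⟩
  · intro t ht
    refine le_antisymm (ciSup_le (fun x => le_of_eq ((hst x).2.2.2.2 t ht))) ?_
    calc (0:ℝ) = star (f x0) (g x0) t := ((hst x0).2.2.2.2 t ht).symm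
    _ ≤ _ := le_ciSup (hbdd t) x0

lemma lip1_dlt (h : IsPMS D star) (a : G) : Lip1 D star (dlt D a) :=
  ⟨fun x => h.mem x a, fun x y t => h.triangle_ineq x y a t⟩

lemma DD_dlt (h : IsPMS D star) {f : G → ℝ → ℝ} (hf : Lip1 D star f) (a : G) :
    DD star (dlt D a) f = f a := by
  have hbdd : ∀ t : ℝ, BddAbove (range (fun x => star (dlt D a x) (f x) t)) := by
    intro t; refine ⟨1, ?_⟩; rintro y ⟨x, rfl⟩
    exact (h.tri.mem _ _ (h.mem x a) (hf.1 x)).2.2.1 t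
  funext t
  refine le_antisymm (ciSup_le (fun x => ?_)) ?_
  · have h1 : star (D a x) (f x) t ≤ f a t := hf.2 a x t
    have h2 : dlt D a x = D a x := h.symm x a
    rw [show star (dlt D a x) (f x) t = star (D a x) (f x) t by rw [h2]]
    exact h1
  · have h1 : D a a = H0 := (h.eq_iff a a).2 rfl
    have h2 : star (dlt D a a) (f a) = f a := by
      show star (D a a) (f a) = f a
      rw [h1, h.tri.comm H0 (f a) memDP_H0 (hf.1 a), h.tri.ident (f a) (hf.1 a)]
    calc f a t = star (dlt D a a) (f a) t := by rw [h2]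
    _ ≤ _ := le_ciSup (hbdd t) a

lemma DD_comm (h : IsPMS D star) {f g : G → ℝ → ℝ}
    (hf : ∀ x, MemDP (f x)) (hg : ∀ x, MemDP (g x)) : DD star f g = DD star g f := by
  funext t
  unfold DD
  congr 1
  funext x
  rw [h.tri.comm (f x) (g x) (hf x) (hg x)]

lemma inPi_dlt (h : IsPMS D star) (a : G) : InPi D star (dlt D a) := by
  refine ⟨lip1_dlt h a, fun _ => a, ?_, ?_⟩
  · intro t ht ε hε
    refine ⟨0, fun n _ p _ => ?_⟩
    show 1 - ε ≤ D a a t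
    rw [(h.eq_iff a a).2 rfl, H0_of_pos ht]
    linarith
  · intro x
    have : dlt D a x = D a x := h.symm x a
    rw [show (fun n : ℕ => D a x) = (fun _ : ℕ => dlt D a x) by funext n; rw [this]]
    exact wconv_const _

lemma not_contAt_H0_zero : ¬ ContinuousAt H0 (0:ℝ) := by
  intro hct
  have h0 : H0 0 = 0 := H0_of_nonpos le_rfl
  have hev : ∀ᶠ s in 𝓝 (0:ℝ), H0 s < 1/2 := by
    have := hct.tendsto
    rw [h0] at this
    exact this.eventually (eventually_lt_nhds (by norm_num))
  obtain ⟨s, hs1, hs2⟩ := ((hev.filter_mono nhdsWithin_le_nhds).and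
    (self_mem_nhdsWithin (s := Ioi (0:ℝ)))).exists
  rw [H0_of_pos hs2] at hs1
  norm_num at hs1

lemma wconvH0_iff {Fn : ℕ → ℝ → ℝ} (hFn : ∀ n, MemDP (Fn n)) :
    WConv Fn H0 ↔ ∀ t > (0:ℝ), ∀ ε > (0:ℝ), ∃ N, ∀ n ≥ N, 1 - ε ≤ Fn n t := by
  constructor
  · intro hw t ht ε hε
    have h1 : Tendsto (fun n => Fn n t) atTop (𝓝 1) := by
      have := hw t (H0_contAt (ne_of_gt ht))
      rwa [H0_of_pos ht] at this
    have := h1.eventually (eventually_ge_nhds (show 1 - ε < 1 by linarith))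
    obtain ⟨N, hN⟩ := eventually_atTop.1 this
    exact ⟨N, hN⟩
  · intro hq t hct
    rcases lt_trichotomy t 0 with ht | ht | ht
    · rw [H0_of_nonpos ht.le]
      apply tendsto_const_nhds.congr
      intro n; exact ((hFn n).2.2.2.2 t ht.le).symm
    · exact absurd hct (ht ▸ not_contAt_H0_zero)
    · rw [H0_of_pos ht]
      have hbu : IsBoundedUnder (· ≤ ·) atTop (fun n => Fn n t) := bddU (fun n => (hFn n).2.2.1 t)
      have hbl : IsBoundedUnder (· ≥ ·) atTop (fun n => Fn n t) := bddL (fun n => (hFn n).2.1 t)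
      apply tendsto_of_le_liminf_of_limsup_le ?_ ?_ hbu hbl
      · by_contra hlt
        push_neg at hlt
        set ℓ := liminf (fun n => Fn n t) atTop with hl
        obtain ⟨N, hN⟩ := hq t ht ((1 - ℓ)/2) (by simp only [hl]; linarith)
        have : 1 - (1 - ℓ)/2 ≤ ℓ := by
          apply le_liminf_of_le hbu.isCoboundedUnder_ge
          filter_upwards [eventually_ge_atTop N] with n hn
          exact hN n hn
        linarith
      · exact limsup_le_of_le hbl.isCoboundedUnder_le
          (Eventually.of_forall (fun n => (hFn n).2.2.1 t))

/-- Cauchy sequences evaluated along diverging index pairs converge weakly to H0. -/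
lemma pcauchy_pair_wconv (h : IsPMS D star) {b : ℕ → G} (hb : PCauchy D b)
    {n m : ℕ → ℕ} (hn : ∀ j, j ≤ n j) (hm : ∀ j, j ≤ m j) :
    WConv (fun j => D (b (n j)) (b (m j))) H0 := by
  rw [wconvH0_iff (fun j => h.mem _ _)]
  intro t ht ε hε
  obtain ⟨N, hN⟩ := hb t ht ε hε
  exact ⟨N, fun j hj => hN (n j) (le_trans hj (hn j)) (m j) (le_trans hj (hm j))⟩

/-- density core: values of a Π-map along its Cauchy sequence tend weakly to H0. -/
lemma lipval (h : IsPMS D star) {f : G → ℝ → ℝ} {a : ℕ → G} (hf : Lip1 D star f)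
    (ha : PCauchy D a) (hw : ∀ x, WConv (fun n => D (a n) x) (f x)) :
    WConv (fun n => f (a n)) H0 := by
  rw [wconvH0_iff (fun n => hf.1 (a n))]
  intro t ht ε hε
  obtain ⟨N, hN⟩ := ha (t/2) (by linarith) ε hε
  refine ⟨N, fun n hn => ?_⟩
  obtain ⟨s, hs, hcs, -⟩ := exists_contAt_Ioo (hf.1 (a n)).1 (hf.1 (a n)).1
    (show t/2 < t by linarith)
  have h1 : 1 - ε ≤ f (a n) s := by
    refine ge_of_tendsto (hw (a n) s hcs) ?_
    filter_upwards [eventually_ge_atTop N] with p hp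
    calc 1 - ε ≤ D (a p) (a n) (t/2) := hN p hp n hn
    _ ≤ D (a p) (a n) s := (h.mem _ _).1 hs.1.le
  exact le_trans h1 ((hf.1 (a n)).1 hs.2.le)

lemma le_DD (h : IsPMS D star) {f g : G → ℝ → ℝ}
    (hf : ∀ x, MemDP (f x)) (hg : ∀ x, MemDP (g x)) (x : G) :
    dpLE (star (f x) (g x)) (DD star f g) := by
  intro t
  have hbdd : BddAbove (range (fun x => star (f x) (g x) t)) := by
    refine ⟨1, ?_⟩; rintro y ⟨z, rfl⟩; exact (h.tri.mem _ _ (hf z) (hg z)).2.2.1 t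
  exact le_ciSup hbdd x

/-- If a subsequence of f(b_j) converges weakly to P, then 𝔻(f,g) ≤ P,
where b generates g. -/
lemma DD_le_of_subseq (h : IsPMS D star) (hcs : StarCont star) {f g : G → ℝ → ℝ}
    (hf : Lip1 D star f) (hg : Lip1 D star g) {b : ℕ → G}
    (hwb : ∀ x, WConv (fun n => D (b n) x) (g x)) {m : ℕ → ℕ}
    (hm : Tendsto m atTop atTop) {P : ℝ → ℝ} (hP : MemDP P)
    (hconv : WConv (fun j => f (b (m j))) P) : dpLE (DD star f g) P := by
  have claim : ∀ x, dpLE (star (g x) (f x)) P := by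
    intro x
    have hA : WConv (fun n => star (D (b n) x) (f x)) (star (g x) (f x)) :=
      hcs (fun n => D (b n) x) (fun _ => f x) (g x) (f x)
        (fun n => h.mem _ _) (fun _ => hf.1 x) (hg.1 x) (hf.1 x)
        (hwb x) (wconv_const _)
    have hA' : WConv (fun j => star (D (b (m j)) x) (f x)) (star (g x) (f x)) :=
      wconv_comp hA hm
    refine le_of_wconv (h.tri.mem _ _ (hg.1 x) (hf.1 x)) hP hA' hconv ?_
    intro j t
    exact hf.2 (b (m j)) x t
  intro t
  refine ciSup_le (fun x => ?_)
  rw [h.tri.comm (f x) (g x) (hf.1 x) (hg.1 x)]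
  exact claim x t

/-- the triangle inequality for 𝔻 on Π(G). -/
lemma DD_triangle (h : IsPMS D star) (hcs : StarCont star) {f g k : G → ℝ → ℝ}
    (hf : InPi D star f) (hg : InPi D star g) (hk : InPi D star k) :
    dpLE (star (DD star f g) (DD star g k)) (DD star f k) := by
  obtain ⟨hgl, b, hbc, hbw⟩ := hg
  obtain ⟨φ, hφ, P, hP, hPconv⟩ := helly (fun n => f (b n)) (fun n => hf.1.1 (b n))
  obtain ⟨ψ, hψ, Q, hQ, hQconv⟩ := helly (fun j => k (b (φ j))) (fun j => hk.1.1 _)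
  have hχ : Tendsto (fun j => φ (ψ j)) atTop atTop :=
    (hφ.tendsto_atTop).comp (hψ.tendsto_atTop)
  have hfP : WConv (fun j => f (b (φ (ψ j)))) P := wconv_comp hPconv hψ.tendsto_atTop
  have hkQ : WConv (fun j => k (b (φ (ψ j)))) Q := hQconv
  have h1 : dpLE (DD star f g) P := DD_le_of_subseq h hcs hf.1 hgl hbw hχ hP hfP
  have h2 : dpLE (DD star g k) Q := by
    rw [DD_comm h (hgl.1) (hk.1.1)]
    exact DD_le_of_subseq h hcs hk.1 hgl hbw hχ hQ hkQ
  have hmfg := memDP_DD h hf.1.1 hgl.1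
  have hmgk := memDP_DD h hgl.1 hk.1.1
  have hmfk := memDP_DD h hf.1.1 hk.1.1
  have h3 : dpLE (star P Q) (DD star f k) := by
    have hS : WConv (fun j => star (f (b (φ (ψ j)))) (k (b (φ (ψ j))))) (star P Q) :=
      hcs _ _ P Q (fun j => hf.1.1 _) (fun j => hk.1.1 _) hP hQ hfP hkQ
    refine le_of_wconv (h.tri.mem _ _ hP hQ) hmfk hS (wconv_const _) ?_
    intro j
    exact le_DD h hf.1.1 hk.1.1 (b (φ (ψ j)))
  intro t
  calc star (DD star f g) (DD star g k) t ≤ star P (DD star g k) t :=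
        h.tri.mono _ P _ hmfg hP hmgk h1 t
  _ = star (DD star g k) P t := by rw [h.tri.comm _ _ hP hmgk]
  _ ≤ star Q P t := h.tri.mono _ Q _ hmgk hQ hP h2 t
  _ = star P Q t := by rw [h.tri.comm _ _ hQ hP]
  _ ≤ DD star f k t := h3 t

lemma DD_self (h : IsPMS D star) (hcs : StarCont star) {f : G → ℝ → ℝ}
    (hf : InPi D star f) : DD star f f = H0 := by
  obtain ⟨hfl, b, hbc, hbw⟩ := hf
  have hmem := memDP_DD h hfl.1 hfl.1
  have hfb : WConv (fun n => f (b n)) H0 := lipval h hfl hbc hbw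
  have hS : WConv (fun n => star (f (b n)) (f (b n))) H0 := by
    have := hcs (fun n => f (b n)) (fun n => f (b n)) H0 H0
      (fun n => hfl.1 _) (fun n => hfl.1 _) memDP_H0 memDP_H0 hfb hfb
    rwa [h.tri.ident H0 memDP_H0] at this
  funext t
  rcases le_or_gt t 0 with ht | ht
  · rw [hmem.2.2.2.2 t ht, H0_of_nonpos ht]
  · rw [H0_of_pos ht]
    refine le_antisymm (hmem.2.2.1 t) ?_
    have h1 : Tendsto (fun n => star (f (b n)) (f (b n)) t) atTop (𝓝 1) := by
      have := hS t (H0_contAt (ne_of_gt ht))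
      rwa [H0_of_pos ht] at this
    refine le_of_tendsto h1 ?_
    filter_upwards with n
    exact le_DD h hfl.1 hfl.1 (b n) t

lemma DD_eq_iff (h : IsPMS D star) (hcs : StarCont star) {f g : G → ℝ → ℝ}
    (hf : InPi D star f) (hg : InPi D star g) : DD star f g = H0 ↔ f = g := by
  constructor
  · intro hDD
    have key : ∀ (u v : G → ℝ → ℝ), InPi D star u → InPi D star v →
        DD star u v = H0 → ∀ x, dpLE (v x) (u x) := by
      intro u v hu hv huv x
      intro t
      have htri := DD_triangle h hcs (inPi_dlt h x) hv hu
      rw [DD_comm h hv.1.1 hu.1.1, huv] at htri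
      have h1 : DD star (dlt D x) v = v x := DD_dlt h hv.1 x
      have h2 : DD star (dlt D x) u = u x := DD_dlt h hu.1 x
      rw [h1, h2, h.tri.ident (v x) (hv.1.1 x)] at htri
      exact htri t
    have h1 := key f g hf hg hDD
    have h2 := key g f hg hf (by rwa [DD_comm h hg.1.1 hf.1.1])
    funext x t
    exact le_antisymm (h2 x t) (h1 x t)
  · rintro rfl
    exact DD_self h hcs hf

/-- key lemma: monotone-in-the-limit property of D along a Cauchy sequence. -/
lemma key_liminf (h : IsPMS D star) (hcs : StarCont star) {b : ℕ → G}
    (hb : PCauchy D b) (x : G) {s t : ℝ} (hst : s < t) :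
    limsup (fun n => D (b n) x s) atTop ≤ liminf (fun m => D (b m) x t) atTop := by
  by_contra hlt
  push_neg at hlt
  set ℓ := liminf (fun m => D (b m) x t) atTop with hldef
  set u := limsup (fun n => D (b n) x s) atTop with hudef
  set c1 := ℓ + (u - ℓ)/4 with hc1
  set c2 := u - (u - ℓ)/4 with hc2
  have hc12 : c1 < c2 := by simp only [hc1, hc2]; linarith
  have hfr1 : ∃ᶠ m in atTop, D (b m) x t < c1 :=
    frequently_lt_of_liminf_lt (bddU (fun m => (h.mem _ _).2.2.1 t)).isCoboundedUnder_ge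
      (by simp only [hc1, ← hldef]; linarith)
  have hfr2 : ∃ᶠ n in atTop, c2 < D (b n) x s :=
    frequently_lt_of_lt_limsup (bddL (fun n => (h.mem _ _).2.1 s)).isCoboundedUnder_le
      (by simp only [hc2, ← hudef]; linarith)
  obtain ⟨φm, hφm, hφm'⟩ := extraction_of_frequently_atTop hfr1
  obtain ⟨φn, hφn, hφn'⟩ := extraction_of_frequently_atTop hfr2
  obtain ⟨χ, hχ, L, hL, hLconv⟩ := helly (fun j => D (b (φn j)) x) (fun j => h.mem _ _)
  obtain ⟨s'', hs'', hcL, -⟩ := exists_contAt_Ioo hL.1 hL.1 hst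
  have hL2 : c2 ≤ L s'' := by
    refine ge_of_tendsto (hLconv s'' hcL) ?_
    filter_upwards with j
    calc c2 ≤ D (b (φn (χ j))) x s := (hφn' (χ j)).le
    _ ≤ D (b (φn (χ j))) x s'' := (h.mem _ _).1 hs''.1.le
  -- the star sequence
  have hH0conv : WConv (fun j => D (b (φm (χ j))) (b (φn (χ j)))) H0 :=
    pcauchy_pair_wconv h hb
      (fun j => le_trans hχ.le_apply hφm.le_apply)
      (fun j => le_trans hχ.le_apply hφn.le_apply)
  have hSconv : WConv (fun j => star (D (b (φm (χ j))) (b (φn (χ j)))) (D (b (φn (χ j))) x)) L := by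
    have := hcs _ _ H0 L (fun j => h.mem _ _) (fun j => h.mem _ _) memDP_H0 hL
      hH0conv hLconv
    rwa [h.tri.comm H0 L memDP_H0 hL, h.tri.ident L hL] at this
  have hL1 : L s'' ≤ c1 := by
    refine le_of_tendsto (hSconv s'' hcL) ?_
    filter_upwards with j
    calc star (D (b (φm (χ j))) (b (φn (χ j)))) (D (b (φn (χ j))) x) s''
        ≤ D (b (φm (χ j))) x s'' := h.triangle_ineq _ _ _ s''
    _ ≤ D (b (φm (χ j))) x t := (h.mem _ _).1 hs''.2.le
    _ ≤ c1 := (hφm' (χ j)).le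
  linarith

/-- construction of the weak limit of D(b_n, ·) for a Cauchy sequence b. -/
lemma limit_exists (h : IsPMS D star) (hcs : StarCont star) {b : ℕ → G}
    (hb : PCauchy D b) :
    ∃ f : G → ℝ → ℝ, (∀ x, MemDP (f x)) ∧ ∀ x, WConv (fun n => D (b n) x) (f x) := by
  set g : G → ℝ → ℝ := fun x s => limsup (fun n => D (b n) x s) atTop with hg
  have hg1 : ∀ x s, g x s ≤ 1 := by
    intro x s
    exact limsup_le_of_le (bddL (fun n => (h.mem _ _).2.1 s)).isCoboundedUnder_le
      (Eventually.of_forall (fun n => (h.mem _ _).2.2.1 s))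
  have hg0 : ∀ x s, 0 ≤ g x s := by
    intro x s
    exact le_limsup_of_frequently_le
      (Frequently.of_forall (fun n => (h.mem _ _).2.1 s))
      (bddU (fun n => (h.mem _ _).2.2.1 s))
  have hgm : ∀ x, Monotone (g x) := by
    intro x s t hst
    exact limsup_le_limsup (Eventually.of_forall (fun n => (h.mem _ _).1 hst))
      (bddL (fun n => (h.mem _ _).2.1 s)).isCoboundedUnder_le
      (bddU (fun n => (h.mem _ _).2.2.1 t))
  have hgz : ∀ x s, s ≤ 0 → g x s = 0 := by
    intro x s hs
    have : (fun n => D (b n) x s) = fun _ => (0:ℝ) :=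
      funext (fun n => (h.mem _ _).2.2.2.2 s hs)
    rw [hg]; simp only [this]
    exact limsup_const 0
  set f : G → ℝ → ℝ := fun x t => sSup (g x '' Iio t) with hf
  have hne : ∀ x (t : ℝ), (g x '' Iio t).Nonempty := fun x t => ⟨g x (t-1), ⟨t-1, by simp, rfl⟩⟩
  have hbdd : ∀ x (t : ℝ), BddAbove (g x '' Iio t) := by
    intro x t; refine ⟨1, ?_⟩; rintro y ⟨s, -, rfl⟩; exact hg1 x s
  have hfm : ∀ x, Monotone (f x) := by
    intro x s t hst
    exact csSup_le_csSup (hbdd x t) (hne x s) (image_mono (fun r hr => lt_of_lt_of_le hr hst))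
  have hfle : ∀ x (s t : ℝ), s < t → g x s ≤ f x t := fun x s t hst => le_csSup (hbdd x t) ⟨s, hst, rfl⟩
  have hfmem : ∀ x, MemDP (f x) := by
    intro x
    refine ⟨hfm x, ?_, ?_, ?_, ?_⟩
    · intro t; exact le_trans (hg0 x (t-1)) (hfle x (t-1) t (by linarith))
    · intro t; refine csSup_le (hne x t) ?_; rintro y ⟨s, -, rfl⟩; exact hg1 x s
    · intro t
      apply tendsto_Iio_of_approx (hfm x)
      intro ε hε
      obtain ⟨y, ⟨s, hs, rfl⟩, hy⟩ := exists_lt_of_lt_csSup (hne x t)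
        (by linarith : f x t - ε < f x t)
      have hs' : s < t := hs
      refine ⟨(s + t)/2, by linarith, lt_of_lt_of_le hy (hfle x s _ (by linarith))⟩
    · intro t ht
      refine le_antisymm (csSup_le (hne x t) ?_) (le_trans (hg0 x (t-1)) (hfle x (t-1) t (by linarith)))
      rintro y ⟨s, hs, rfl⟩
      have hs' : s < t := hs
      exact le_of_eq (hgz x s (by linarith))
  refine ⟨f, hfmem, ?_⟩
  intro x t hct
  have hbu : IsBoundedUnder (· ≤ ·) atTop (fun n => D (b n) x t) := bddU (fun n => (h.mem _ _).2.2.1 t)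
  have hbl : IsBoundedUnder (· ≥ ·) atTop (fun n => D (b n) x t) := bddL (fun n => (h.mem _ _).2.1 t)
  apply tendsto_of_le_liminf_of_limsup_le ?_ ?_ hbu hbl
  · refine csSup_le (hne x t) ?_
    rintro y ⟨s, hs, rfl⟩
    exact key_liminf h hcs hb x hs
  · apply le_of_forall_pos_le_add
    intro ε hε
    obtain ⟨δ, hδ, hδ'⟩ := Metric.continuousAt_iff.1 hct (ε/2) (by linarith)
    have h1 : f x (t + δ/2) < f x t + ε/2 := by
      have := hδ' (show dist (t + δ/2) t < δ by
        rw [Real.dist_eq, abs_of_pos] <;> linarith)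
      rw [Real.dist_eq] at this
      have := abs_lt.1 this
      linarith [this.1]
    calc limsup (fun n => D (b n) x t) atTop = g x t := rfl
    _ ≤ f x (t + δ/2) := hfle x t _ (by linarith)
    _ ≤ f x t + ε := by linarith

lemma completeness (h : IsPMS D star) (hcs : StarCont star)
    (F : ℕ → G → ℝ → ℝ) (hF : ∀ n, InPi D star (F n))
    (hca : ∀ t > (0:ℝ), ∀ ε > (0:ℝ), ∃ N, ∀ n ≥ N, ∀ m ≥ N,
      1 - ε ≤ DD star (F n) (F m) t) :
    ∃ f, InPi D star f ∧ WConv (fun n => DD star (F n) f) H0 := by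
  -- (c1) pick approximating points
  have hpick : ∀ n : ℕ, ∃ p : G, 1 - 1/((n:ℝ)+1) < F n p (1/((n:ℝ)+1)) := by
    intro n
    obtain ⟨hlip, a, hac, haw⟩ := hF n
    have hv : WConv (fun k => F n (a k)) H0 := lipval h hlip hac haw
    have hpos : (0:ℝ) < 1/((n:ℝ)+1) := by positivity
    have h1 : Tendsto (fun k => F n (a k) (1/((n:ℝ)+1))) atTop (𝓝 1) := by
      have := hv _ (H0_contAt (ne_of_gt hpos))
      rwa [H0_of_pos hpos] at this
    have h2 : 1 - 1/((n:ℝ)+1) < 1 := by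
      have : (0:ℝ) < 1/((n:ℝ)+1) := hpos
      linarith
    obtain ⟨k, hk⟩ := (h1.eventually (eventually_gt_nhds h2)).exists
    exact ⟨a k, hk⟩
  choose b hb using hpick
  -- (c1b) F n (b n) → H0 quantitatively
  have hFb : ∀ t > (0:ℝ), ∀ ε > (0:ℝ), ∃ N, ∀ n ≥ N, 1 - ε ≤ F n (b n) t := by
    intro t ht ε hε
    obtain ⟨N, hN⟩ := exists_nat_gt (max (1/t) (1/ε))
    refine ⟨N, fun n hn => ?_⟩
    have hn1 : (0:ℝ) < (n:ℝ)+1 := by positivity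
    have hNn : (N:ℝ) ≤ (n:ℝ) := by exact_mod_cast hn
    have h1t : 1/t < (n:ℝ)+1 := by
      have := le_max_left (1/t) (1/ε)
      linarith
    have h1e : 1/ε < (n:ℝ)+1 := by
      have := le_max_right (1/t) (1/ε)
      linarith
    have hlt : 1/((n:ℝ)+1) < t := (one_div_lt hn1 ht).2 h1t
    have hle : 1/((n:ℝ)+1) < ε := (one_div_lt hn1 hε).2 h1e
    calc 1 - ε ≤ 1 - 1/((n:ℝ)+1) := by linarith
    _ ≤ F n (b n) (1/((n:ℝ)+1)) := (hb n).le
    _ ≤ F n (b n) t := ((hF n).1.1 (b n)).1 hlt.le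
  -- pointwise lower bound for D (b n) (b m)
  have hSle : ∀ n m : ℕ, dpLE
      (star (F n (b n)) (star (DD star (F n) (F m)) (F m (b m))))
      (D (b n) (b m)) := by
    intro n m
    have hδn := inPi_dlt h (b n)
    have hδm := inPi_dlt h (b m)
    have step1 := DD_triangle h hcs hδn (hF n) hδm
    have step2 := DD_triangle h hcs (hF n) (hF m) hδm
    have e1 : DD star (dlt D (b n)) (F n) = F n (b n) := DD_dlt h (hF n).1 (b n)
    have e2 : DD star (F m) (dlt D (b m)) = F m (b m) := by
      rw [DD_comm h (hF m).1.1 (lip1_dlt h (b m)).1]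
      exact DD_dlt h (hF m).1 (b m)
    have e3 : DD star (dlt D (b n)) (dlt D (b m)) = D (b n) (b m) :=
      DD_dlt h (lip1_dlt h (b m)) (b n)
    rw [e1, e3] at step1
    rw [e2] at step2
    -- memDP facts
    have mA : MemDP (F n (b n)) := (hF n).1.1 (b n)
    have mB : MemDP (star (DD star (F n) (F m)) (F m (b m))) :=
      h.tri.mem _ _ (memDP_DD h (hF n).1.1 (hF m).1.1) ((hF m).1.1 (b m))
    have mB' : MemDP (DD star (F n) (dlt D (b m))) :=
      memDP_DD h (hF n).1.1 (lip1_dlt h (b m)).1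
    intro t
    calc star (F n (b n)) (star (DD star (F n) (F m)) (F m (b m))) t
        = star (star (DD star (F n) (F m)) (F m (b m))) (F n (b n)) t := by
          rw [h.tri.comm _ _ mA mB]
    _ ≤ star (DD star (F n) (dlt D (b m))) (F n (b n)) t :=
          h.tri.mono _ _ _ mB mB' mA step2 t
    _ = star (F n (b n)) (DD star (F n) (dlt D (b m))) t := by
          rw [h.tri.comm _ _ mB' mA]
    _ ≤ D (b n) (b m) t := step1 t
  -- (c2) b is Cauchy
  have hbC : PCauchy D b := by
    intro t ht ε hε
    by_contra hcon
    push_neg at hcon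
    choose n hn p hp hlt using hcon
    have hW1 : WConv (fun j => F (n j) (b (n j))) H0 := by
      rw [wconvH0_iff (fun j => (hF (n j)).1.1 (b (n j)))]
      intro t' ht' ε' hε'
      obtain ⟨N, hN⟩ := hFb t' ht' ε' hε'
      exact ⟨N, fun j hj => hN (n j) (le_trans hj (hn j))⟩
    have hW3 : WConv (fun j => F (p j) (b (p j))) H0 := by
      rw [wconvH0_iff (fun j => (hF (p j)).1.1 (b (p j)))]
      intro t' ht' ε' hε'
      obtain ⟨N, hN⟩ := hFb t' ht' ε' hε'
      exact ⟨N, fun j hj => hN (p j) (le_trans hj (hp j))⟩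
    have hW2 : WConv (fun j => DD star (F (n j)) (F (p j))) H0 := by
      rw [wconvH0_iff (fun j => memDP_DD h (hF (n j)).1.1 (hF (p j)).1.1)]
      intro t' ht' ε' hε'
      obtain ⟨N, hN⟩ := hca t' ht' ε' hε'
      exact ⟨N, fun j hj => hN (n j) (le_trans hj (hn j)) (p j) (le_trans hj (hp j))⟩
    have hinner : WConv (fun j => star (DD star (F (n j)) (F (p j))) (F (p j) (b (p j)))) H0 := by
      have := hcs _ _ H0 H0 (fun j => memDP_DD h (hF (n j)).1.1 (hF (p j)).1.1)
        (fun j => (hF (p j)).1.1 (b (p j))) memDP_H0 memDP_H0 hW2 hW3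
      rwa [h.tri.ident H0 memDP_H0] at this
    have hS : WConv (fun j => star (F (n j) (b (n j)))
        (star (DD star (F (n j)) (F (p j))) (F (p j) (b (p j))))) H0 := by
      have := hcs _ _ H0 H0 (fun j => (hF (n j)).1.1 (b (n j)))
        (fun j => h.tri.mem _ _ (memDP_DD h (hF (n j)).1.1 (hF (p j)).1.1)
          ((hF (p j)).1.1 (b (p j)))) memDP_H0 memDP_H0 hW1 hinner
      rwa [h.tri.ident H0 memDP_H0] at this
    have h1 : Tendsto (fun j => star (F (n j) (b (n j)))
        (star (DD star (F (n j)) (F (p j))) (F (p j) (b (p j)))) t) atTop (𝓝 1) := by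
      have := hS t (H0_contAt (ne_of_gt ht))
      rwa [H0_of_pos ht] at this
    obtain ⟨j, hj⟩ := (h1.eventually (eventually_gt_nhds
      (show 1 - ε < 1 by linarith))).exists
    exact absurd (lt_of_lt_of_le hj (hSle (n j) (p j) t)) (not_lt.2 (hlt j).le)
  -- (c3) limit function
  obtain ⟨f, hfmem, hfw⟩ := limit_exists h hcs hbC
  -- (c4) f is 1-Lipschitz
  have hlip : Lip1 D star f := by
    refine ⟨hfmem, fun x y => ?_⟩
    have hA : WConv (fun k => star (D x y) (D (b k) y)) (star (D x y) (f y)) :=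
      hcs (fun _ => D x y) (fun k => D (b k) y) (D x y) (f y)
        (fun _ => h.mem x y) (fun k => h.mem _ _) (h.mem x y) (hfmem y)
        (wconv_const _) (hfw y)
    refine le_of_wconv (h.tri.mem _ _ (h.mem x y) (hfmem y)) (hfmem x) hA (hfw x) ?_
    intro k t
    have h1 : D (b k) y = D y (b k) := h.symm _ _
    have h2 : D x (b k) = D (b k) x := h.symm _ _
    rw [h1, ← h2]
    exact h.triangle_ineq x y (b k) t
  have hfPi : InPi D star f := ⟨hlip, b, hbC, hfw⟩
  refine ⟨f, hfPi, ?_⟩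
  -- (c6) convergence of DD (F n) f to H0
  have hfb' : WConv (fun k => f (b k)) H0 := lipval h hlip hbC hfw
  have hW1 : WConv (fun k => F k (b k)) H0 := by
    rw [wconvH0_iff (fun k => (hF k).1.1 (b k))]
    exact hFb
  have hS : WConv (fun k => star (F k (b k)) (f (b k))) H0 := by
    have := hcs _ _ H0 H0 (fun k => (hF k).1.1 (b k)) (fun k => hfmem (b k))
      memDP_H0 memDP_H0 hW1 hfb'
    rwa [h.tri.ident H0 memDP_H0] at this
  have hbound : ∀ k, dpLE (star (F k (b k)) (f (b k))) (DD star (F k) f) := by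
    intro k
    have step := DD_triangle h hcs (hF k) (inPi_dlt h (b k)) hfPi
    have e1 : DD star (F k) (dlt D (b k)) = F k (b k) := by
      rw [DD_comm h (hF k).1.1 (lip1_dlt h (b k)).1]
      exact DD_dlt h (hF k).1 (b k)
    have e2 : DD star (dlt D (b k)) f = f (b k) := DD_dlt h hlip (b k)
    rwa [e1, e2] at step
  rw [wconvH0_iff (fun k => memDP_DD h (hF k).1.1 hfmem)]
  intro t ht ε hε
  have h1 : Tendsto (fun k => star (F k (b k)) (f (b k)) t) atTop (𝓝 1) := by
    have := hS t (H0_contAt (ne_of_gt ht))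
    rwa [H0_of_pos ht] at this
  obtain ⟨N, hN⟩ := eventually_atTop.1
    (h1.eventually (eventually_ge_nhds (show 1 - ε < 1 by linarith)))
  exact ⟨N, fun k hk => le_trans (hN k hk) (hbound k t)⟩

end PMS
end Helpers

/-- (Π(G), 𝔻, ⋆) is a probabilistic complete metric space,
𝔻(δ_a,δ_b) = D(a,b), and δ(G) is dense in Π(G): a completion of (G,D,⋆). -/
theorem stmt14 {G : Type} [Nonempty G] (D : G → G → ℝ → ℝ)
    (star : (ℝ → ℝ) → (ℝ → ℝ) → (ℝ → ℝ)) (h : IsPMS D star)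
    (hc : StarCont star) :
    (∀ a b : G, DD star (dlt D a) (dlt D b) = D a b) ∧
    (∀ f g, InPi D star f → InPi D star g → MemDP (DD star f g)) ∧
    (∀ f g, InPi D star f → InPi D star g → (DD star f g = H0 ↔ f = g)) ∧
    (∀ f g, InPi D star f → InPi D star g → DD star f g = DD star g f) ∧
    (∀ f g k, InPi D star f → InPi D star g → InPi D star k →
      dpLE (star (DD star f g) (DD star g k)) (DD star f k)) ∧
    (∀ F : ℕ → G → ℝ → ℝ, (∀ n, InPi D star (F n)) →
      (∀ t > (0:ℝ), ∀ ε > (0:ℝ), ∃ N, ∀ n ≥ N, ∀ m ≥ N,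
        1 - ε ≤ DD star (F n) (F m) t) →
      ∃ f, InPi D star f ∧ WConv (fun n => DD star (F n) f) H0) ∧
    (∀ f, InPi D star f →
      ∃ a : ℕ → G, WConv (fun n => DD star (dlt D (a n)) f) H0) := by
  refine ⟨?_, ?_, ?_, ?_, ?_, ?_, ?_⟩
  · intro a b
    exact DD_dlt h (lip1_dlt h b) a
  · intro f g hf hg
    exact memDP_DD h hf.1.1 hg.1.1
  · intro f g hf hg
    exact DD_eq_iff h hc hf hg
  · intro f g hf hg
    exact DD_comm h hf.1.1 hg.1.1
  · intro f g k hf hg hk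
    exact DD_triangle h hc hf hg hk
  · exact completeness h hc
  · intro f hf
    obtain ⟨hlip, a, hac, haw⟩ := hf
    refine ⟨a, ?_⟩
    have he : (fun n => DD star (dlt D (a n)) f) = fun n => f (a n) :=
      funext fun n => DD_dlt h hlip (a n)
    rw [he]
    exact lipval h hlip hac haw
end
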